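/- Let m be a nonnegative integer and set f(z) = (sin z)^{m+1} + (sin z)^{m+1} e^{z²}, g(z) = (sin z)^{m+1} + (sin z)^{m+2} e^{z²} and α(z) = (sin z)^{m+1}, entire functions on ℂ. Then f − α = (sin z)^{m+1} e^{z²} has zeros exactly on πℤ, each of order m+1, and g − α = (sin z)^{m+2} e^{z²} has zeros exactly on πℤ, each of order m+2; in particular f and g share α with weight m in the sense of vanishing. But f/α − 1 = e^{z²} has no zeros while g/α − 1 = (sin z) e^{z²} vanishes at every point of πℤ, so f/α and g/α do not share the value 1, not even IM. -/

import Mathlib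

open Complex Topology
open scoped Classical

/-- The order of a meromorphic function at a point (junk value `0` if `f` is
not meromorphic at `z`).  Order `⊤` means `f ≡ 0` near `z`, a positive order
is the multiplicity of a zero, a negative order is minus the multiplicity of
a pole. -/
noncomputable def morder (f : ℂ → ℂ) (z : ℂ) : WithTop ℤ :=
  if h : MeromorphicAt f z then meromorphicOrderAt f z else 0

/-- `f(z) = α(z)` in the sense of value: at a pole of `α` it means that `f`
also has a pole at `z`; elsewhere it means that the meromorphic function
`f - α` vanishes at `z`. -/
def ValueEqAt (f α : ℂ → ℂ) (z : ℂ) : Prop :=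
  (morder α z < 0 ∧ morder f z < 0) ∨ (0 ≤ morder α z ∧ 0 < morder (f - α) z)

/-- `f` and `g` share the function `α` IM in the sense of value on `D`. -/
def ShareIMValue (f g α : ℂ → ℂ) (D : Set ℂ) : Prop :=
  ∀ z ∈ D, (ValueEqAt f α z ↔ ValueEqAt g α z)

/-- `f` and `g` share the function `α` CM in the sense of value on `D`:
at points where `α` is finite the orders of the zeros of `f - α` and `g - α`
agree, and at poles of `α` the orders of the zeros of `1/f - 1/α` and
`1/g - 1/α` agree. -/
def ShareCMValue (f g α : ℂ → ℂ) (D : Set ℂ) : Prop :=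
  ∀ z ∈ D,
    (0 ≤ morder α z → ∀ m : ℕ, 1 ≤ m →
      (morder (f - α) z = (m : ℤ) ↔ morder (g - α) z = (m : ℤ))) ∧
    (morder α z < 0 → ∀ m : ℕ, 1 ≤ m →
      (morder (f⁻¹ - α⁻¹) z = (m : ℤ) ↔ morder (g⁻¹ - α⁻¹) z = (m : ℤ)))

/-- `f` and `g` share the function `α` IM in the sense of vanishing on `D`:
`f - α` and `g - α` have the same zeros (ignoring multiplicities). -/
def ShareIMVanishing (f g α : ℂ → ℂ) (D : Set ℂ) : Prop :=
  ∀ z ∈ D, (0 < morder (f - α) z ↔ 0 < morder (g - α) z)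

/-- `f` and `g` share the function `α` CM in the sense of vanishing on `D`:
`f - α` and `g - α` have the same zeros with the same multiplicities. -/
def ShareCMVanishing (f g α : ℂ → ℂ) (D : Set ℂ) : Prop :=
  ∀ z ∈ D, ∀ m : ℕ, 1 ≤ m →
    (morder (f - α) z = (m : ℤ) ↔ morder (g - α) z = (m : ℤ))

/-- `f` and `g` share the function `α` with weight `m` in the sense of
vanishing on `D`: for each `k = 1, …, m` the `k`-fold zeros of `f - α`
coincide with the `k`-fold zeros of `g - α`, and the zeros of `f - α` of
multiplicity greater than `m` coincide in location with those of `g - α`. -/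
def ShareWeightVanishing (f g α : ℂ → ℂ) (m : ℕ) (D : Set ℂ) : Prop :=
  ∀ z ∈ D,
    (∀ k : ℕ, 1 ≤ k → k ≤ m →
      (morder (f - α) z = (k : ℤ) ↔ morder (g - α) z = (k : ℤ))) ∧
    ((m : ℤ) < morder (f - α) z ↔ (m : ℤ) < morder (g - α) z)

private lemma sinA (z : ℂ) : AnalyticAt ℂ Complex.sin z :=
  Complex.differentiable_sin.analyticAt z

private lemma expsqA (z : ℂ) : AnalyticAt ℂ (fun w => Complex.exp (w ^ 2)) z :=
  (Complex.differentiable_exp.comp (differentiable_pow 2)).analyticAt z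

private lemma FA (n : ℕ) (z : ℂ) :
    AnalyticAt ℂ (fun w => Complex.sin w ^ n * Complex.exp (w ^ 2)) z :=
  ((sinA z).pow n).mul (expsqA z)

private lemma dslopeA (c : ℂ) : AnalyticAt ℂ (dslope Complex.sin c) c := by
  obtain ⟨p, hp⟩ := sinA c
  exact hp.has_fpower_series_dslope_fslope.analyticAt

private lemma cosc_ne (k : ℤ) : Complex.cos ((k : ℂ) * Real.pi) ≠ 0 := by
  have h : ((k : ℂ) * Real.pi) = (((k : ℝ) * Real.pi : ℝ) : ℂ) := by push_cast; ring
  rw [h, ← Complex.ofReal_cos]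
  have habs := Real.abs_cos_int_mul_pi k
  intro hc
  rw [Complex.ofReal_eq_zero] at hc
  rw [hc] at habs
  simp at habs

private lemma sin_ev_ne (z : ℂ) : ∀ᶠ w in 𝓝[≠] z, Complex.sin w ≠ 0 := by
  by_cases hz : Complex.sin z = 0
  · obtain ⟨k, rfl⟩ := Complex.sin_eq_zero_iff.mp hz
    rw [eventually_nhdsWithin_iff, Metric.eventually_nhds_iff]
    refine ⟨Real.pi, Real.pi_pos, fun w hw hw' hsw => ?_⟩
    obtain ⟨j, rfl⟩ := Complex.sin_eq_zero_iff.mp hsw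
    have hjk : j ≠ k := by
      intro h
      rw [h] at hw'
      simp at hw'
    have hd : dist ((j:ℂ)*Real.pi) ((k:ℂ)*Real.pi) = |(j : ℝ) - k| * Real.pi := by
      rw [Complex.dist_eq]
      have h2 : (j:ℂ)*Real.pi - (k:ℂ)*Real.pi = ((((j:ℝ) - k) * Real.pi : ℝ) : ℂ) := by
        push_cast; ring
      rw [h2, Complex.norm_real, Real.norm_eq_abs, abs_mul, abs_of_pos Real.pi_pos]
    rw [hd] at hw
    have h1 : (1 : ℝ) ≤ |(j : ℝ) - k| := by
      have h0 : (1 : ℤ) ≤ |j - k| := Int.one_le_abs (sub_ne_zero.mpr hjk)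
      calc (1:ℝ) ≤ |(j - k : ℤ)| := by exact_mod_cast h0
        _ = |(j:ℝ) - k| := by push_cast; rfl
    nlinarith [Real.pi_pos]
  · exact ((Complex.continuous_sin.continuousAt (x := z)).eventually_ne hz).filter_mono
      nhdsWithin_le_nhds

private lemma morder_eq {F : ℂ → ℂ} {z : ℂ} (hm : MeromorphicAt F z) (n : ℤ)
    (g : ℂ → ℂ) (hg : AnalyticAt ℂ g z) (hgz : g z ≠ 0)
    (hev : ∀ᶠ w in 𝓝[≠] z, F w = (w - z) ^ n * g w) :
    morder F z = n := by
  unfold morder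
  rw [dif_pos hm, (meromorphicOrderAt_eq_int_iff hm).mpr ⟨g, hg, hgz, by simpa [smul_eq_mul] using hev⟩]

private lemma morder_F_ne (n : ℕ) (z : ℂ) (hz : Complex.sin z ≠ 0) :
    morder (fun w => Complex.sin w ^ n * Complex.exp (w ^ 2)) z = (0 : ℤ) :=
  morder_eq (FA n z).meromorphicAt 0 _ (FA n z)
    (mul_ne_zero (pow_ne_zero _ hz) (Complex.exp_ne_zero _))
    (Filter.Eventually.of_forall fun w => by simp)

private lemma dslope_sin_eq {c w : ℂ} (hc : Complex.sin c = 0) (hw : w ≠ c) :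
    dslope Complex.sin c w = Complex.sin w / (w - c) := by
  rw [dslope_of_ne _ hw, slope_def_field, hc, sub_zero]

private lemma dslope_sin_ne (k : ℤ) : dslope Complex.sin ((k:ℂ) * Real.pi) ((k:ℂ) * Real.pi) ≠ 0 := by
  rw [dslope_same, Complex.deriv_sin]
  exact cosc_ne k

private lemma morder_F_pi (n : ℕ) (k : ℤ) :
    morder (fun w => Complex.sin w ^ n * Complex.exp (w ^ 2)) ((k:ℂ) * Real.pi) = (n : ℤ) := by
  set c : ℂ := (k:ℂ) * Real.pi with hc
  have hsc : Complex.sin c = 0 := Complex.sin_eq_zero_iff.mpr ⟨k, rfl⟩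
  refine morder_eq (FA n c).meromorphicAt n
    (fun w => (dslope Complex.sin c w) ^ n * Complex.exp (w ^ 2))
    (((dslopeA c).pow n).mul (expsqA c))
    (mul_ne_zero (pow_ne_zero _ (dslope_sin_ne k)) (Complex.exp_ne_zero _)) ?_
  rw [eventually_nhdsWithin_iff]
  refine Filter.Eventually.of_forall fun w hw => ?_
  have hwc : w ≠ c := hw
  show Complex.sin w ^ n * Complex.exp (w ^ 2) =
    (w - c) ^ (n : ℤ) * (dslope Complex.sin c w ^ n * Complex.exp (w ^ 2))
  rw [dslope_sin_eq hsc hwc, zpow_natCast, div_pow]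
  have hne : (w - c) ^ n ≠ 0 := pow_ne_zero _ (sub_ne_zero.mpr hwc)
  field_simp

/-- Example 10: for every nonnegative integer `m`, the entire
functions `f = (sin z)^{m+1}(1 + e^{z²})` and
`g = (sin z)^{m+1} + (sin z)^{m+2} e^{z²}` share `α = (sin z)^{m+1}` with
weight `m` in the sense of vanishing (the differences have zeros exactly on
`πℤ`, of orders `m+1` and `m+2` respectively), but `f/α - 1 = e^{z²}` has no
zeros while `g/α - 1 = (sin z)e^{z²}` vanishes on `πℤ`; hence `f/α` and `g/α`
do not share the value `1`, not even IM. -/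
theorem example_ten (m : ℕ) (f g α : ℂ → ℂ)
    (hfdef : f = fun z => (Complex.sin z) ^ (m + 1) +
      (Complex.sin z) ^ (m + 1) * exp (z ^ 2))
    (hgdef : g = fun z => (Complex.sin z) ^ (m + 1) +
      (Complex.sin z) ^ (m + 2) * exp (z ^ 2))
    (hαdef : α = fun z => (Complex.sin z) ^ (m + 1)) :
    (∀ z, f z - α z = (Complex.sin z) ^ (m + 1) * exp (z ^ 2)) ∧
    (∀ z, g z - α z = (Complex.sin z) ^ (m + 2) * exp (z ^ 2)) ∧
    (∀ z, 0 < morder (f - α) z ↔ ∃ k : ℤ, z = (k : ℂ) * Real.pi) ∧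
    (∀ k : ℤ, morder (f - α) ((k : ℂ) * Real.pi) = ((m : ℤ) + 1)) ∧
    (∀ z, 0 < morder (g - α) z ↔ ∃ k : ℤ, z = (k : ℂ) * Real.pi) ∧
    (∀ k : ℤ, morder (g - α) ((k : ℂ) * Real.pi) = ((m : ℤ) + 2)) ∧
    ShareWeightVanishing f g α m Set.univ ∧
    (∀ z, Complex.sin z ≠ 0 → f z / α z - 1 = exp (z ^ 2)) ∧
    (∀ z, Complex.sin z ≠ 0 → g z / α z - 1 = Complex.sin z * exp (z ^ 2)) ∧
    (∀ z, ¬ 0 < morder (f / α - 1) z) ∧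
    (∀ k : ℤ, 0 < morder (g / α - 1) ((k : ℂ) * Real.pi)) ∧
    ¬ ShareIMVanishing (f / α) (g / α) 1 Set.univ := by
  have hfα : f - α = fun w => Complex.sin w ^ (m + 1) * Complex.exp (w ^ 2) := by
    funext w; simp only [Pi.sub_apply, hfdef, hαdef]; ring
  have hgα : g - α = fun w => Complex.sin w ^ (m + 2) * Complex.exp (w ^ 2) := by
    funext w; simp only [Pi.sub_apply, hgdef, hαdef]; ring
  have hfA : ∀ w, AnalyticAt ℂ f w := by
    intro w; rw [hfdef]
    exact ((sinA w).pow _).add (((sinA w).pow _).mul (expsqA w))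
  have hgA : ∀ w, AnalyticAt ℂ g w := by
    intro w; rw [hgdef]
    exact ((sinA w).pow _).add (((sinA w).pow _).mul (expsqA w))
  have hαA : ∀ w, AnalyticAt ℂ α w := by
    intro w; rw [hαdef]; exact (sinA w).pow _
  have p1 : ∀ z, f z - α z = (Complex.sin z) ^ (m + 1) * Complex.exp (z ^ 2) := by
    intro z; simp only [hfdef, hαdef]; ring
  have p2 : ∀ z, g z - α z = (Complex.sin z) ^ (m + 2) * Complex.exp (z ^ 2) := by
    intro z; simp only [hgdef, hαdef]; ring
  have p3 : ∀ z, 0 < morder (f - α) z ↔ ∃ k : ℤ, z = (k : ℂ) * Real.pi := by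
    intro z
    rw [hfα]
    constructor
    · intro h
      by_contra hk
      have hs : Complex.sin z ≠ 0 := fun h0 => hk (Complex.sin_eq_zero_iff.mp h0)
      rw [morder_F_ne (m + 1) z hs] at h
      exact absurd (by exact_mod_cast h) (lt_irrefl (0 : ℤ))
    · rintro ⟨k, rfl⟩
      rw [morder_F_pi (m + 1) k]
      exact_mod_cast (by positivity : (0 : ℤ) < ((m + 1 : ℕ) : ℤ))
  have p4 : ∀ k : ℤ, morder (f - α) ((k : ℂ) * Real.pi) = ((m : ℤ) + 1) := by
    intro k; rw [hfα, morder_F_pi (m + 1) k]; norm_cast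
  have p5 : ∀ z, 0 < morder (g - α) z ↔ ∃ k : ℤ, z = (k : ℂ) * Real.pi := by
    intro z
    rw [hgα]
    constructor
    · intro h
      by_contra hk
      have hs : Complex.sin z ≠ 0 := fun h0 => hk (Complex.sin_eq_zero_iff.mp h0)
      rw [morder_F_ne (m + 2) z hs] at h
      exact absurd (by exact_mod_cast h) (lt_irrefl (0 : ℤ))
    · rintro ⟨k, rfl⟩
      rw [morder_F_pi (m + 2) k]
      exact_mod_cast (by positivity : (0 : ℤ) < ((m + 2 : ℕ) : ℤ))
  have p6 : ∀ k : ℤ, morder (g - α) ((k : ℂ) * Real.pi) = ((m : ℤ) + 2) := by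
    intro k; rw [hgα, morder_F_pi (m + 2) k]; norm_cast
  have p7 : ShareWeightVanishing f g α m Set.univ := by
    intro z _
    rw [hfα, hgα]
    by_cases hs : Complex.sin z = 0
    · obtain ⟨k, rfl⟩ := Complex.sin_eq_zero_iff.mp hs
      rw [morder_F_pi (m + 1) k, morder_F_pi (m + 2) k]
      refine ⟨fun k' hk1 hk2 => ⟨fun h => absurd (by exact_mod_cast h :
        ((m + 1 : ℕ) : ℤ) = (k' : ℤ)) (by push_cast; omega),
        fun h => absurd (by exact_mod_cast h : ((m + 2 : ℕ) : ℤ) = (k' : ℤ))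
          (by push_cast; omega)⟩, ?_⟩
      constructor
      · intro _
        exact_mod_cast (by push_cast; omega : (m : ℤ) < ((m + 2 : ℕ) : ℤ))
      · intro _
        exact_mod_cast (by push_cast; omega : (m : ℤ) < ((m + 1 : ℕ) : ℤ))
    · rw [morder_F_ne (m + 1) z hs, morder_F_ne (m + 2) z hs]
      refine ⟨fun k' hk1 _ => ⟨fun h => absurd (by exact_mod_cast h :
        (0 : ℤ) = (k' : ℤ)) (by omega),
        fun h => absurd (by exact_mod_cast h : (0 : ℤ) = (k' : ℤ)) (by omega)⟩, ?_⟩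
      constructor
      · intro h; exact absurd (by exact_mod_cast h : (m : ℤ) < 0) (by omega)
      · intro h; exact absurd (by exact_mod_cast h : (m : ℤ) < 0) (by omega)
  have p8 : ∀ z, Complex.sin z ≠ 0 → f z / α z - 1 = Complex.exp (z ^ 2) := by
    intro z hz
    simp only [hfdef, hαdef]
    have hne : Complex.sin z ^ (m + 1) ≠ 0 := pow_ne_zero _ hz
    field_simp
    ring
  have p9 : ∀ z, Complex.sin z ≠ 0 → g z / α z - 1 = Complex.sin z * Complex.exp (z ^ 2) := by
    intro z hz
    simp only [hgdef, hαdef]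
    have hne : Complex.sin z ^ (m + 1) ≠ 0 := pow_ne_zero _ hz
    field_simp
    ring
  have p10 : ∀ z, ¬ 0 < morder (f / α - 1) z := by
    intro z
    have hm : MeromorphicAt (f / α - 1) z :=
      ((hfA z).meromorphicAt.div (hαA z).meromorphicAt).sub (MeromorphicAt.const 1 z)
    have h0 : morder (f / α - 1) z = (0 : ℤ) := by
      refine morder_eq hm 0 (fun w => Complex.exp (w ^ 2)) (expsqA z)
        (Complex.exp_ne_zero _) ?_
      filter_upwards [sin_ev_ne z] with w hw
      simp only [Pi.sub_apply, Pi.div_apply, Pi.one_apply, zpow_zero, one_mul]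
      exact p8 w hw
    rw [h0]
    intro h
    exact absurd (by exact_mod_cast h) (lt_irrefl (0 : ℤ))
  have p11 : ∀ k : ℤ, 0 < morder (g / α - 1) ((k : ℂ) * Real.pi) := by
    intro k
    set c : ℂ := (k : ℂ) * Real.pi with hc
    have hsc : Complex.sin c = 0 := Complex.sin_eq_zero_iff.mpr ⟨k, rfl⟩
    have hm : MeromorphicAt (g / α - 1) c :=
      ((hgA c).meromorphicAt.div (hαA c).meromorphicAt).sub (MeromorphicAt.const 1 c)
    have h1 : morder (g / α - 1) c = (1 : ℤ) := by
      refine morder_eq hm 1 (fun w => dslope Complex.sin c w * Complex.exp (w ^ 2))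
        ((dslopeA c).mul (expsqA c))
        (mul_ne_zero (dslope_sin_ne k) (Complex.exp_ne_zero _)) ?_
      filter_upwards [sin_ev_ne c, self_mem_nhdsWithin] with w hw hw'
      have hwc : w ≠ c := hw'
      simp only [Pi.sub_apply, Pi.div_apply, Pi.one_apply]
      rw [p9 w hw, dslope_sin_eq hsc hwc, zpow_one]
      have h2 : w - c ≠ 0 := sub_ne_zero.mpr hwc
      field_simp
    rw [h1]
    exact_mod_cast (by omega : (0 : ℤ) < 1)
  refine ⟨p1, p2, p3, p4, p5, p6, p7, p8, p9, p10, p11, ?_⟩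
  intro hsh
  have h := hsh 0 (Set.mem_univ 0)
  have h2 := p11 0
  rw [show ((0 : ℤ) : ℂ) * (Real.pi : ℂ) = 0 by simp] at h2
  exact p10 0 (h.mpr h2)
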